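/- Let k ≥ 1 and let (M_i)_{i ∈ Fin k} be a family of n×n complex matrices with ∑_i M_iᴴ·M_i = I. Then there exists a unitary matrix U indexed by (Fin n × Fin k) — i.e. U ∈ Matrix.unitaryGroup (Fin n × Fin k) ℂ — such that for every vector ψ ∈ ℂⁿ, U·(ψ ⊗ e₀) = ∑_i (M_i·ψ) ⊗ e_i; explicitly, (U.mulVec (fun (a,b) => ψ a * (if b = 0 then 1 else 0))) (a, i) = ((M_i).mulVec ψ) a for all a ∈ Fin n and i ∈ Fin k. -/

import Mathlib

open Matrix

theorem measurement_dilation {n k : ℕ} (hk : 1 ≤ k)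
    (M : Fin k → Matrix (Fin n) (Fin n) ℂ)
    (hmeas : ∑ i, (M i)ᴴ * M i = 1) :
    ∃ U : Matrix (Fin n × Fin k) (Fin n × Fin k) ℂ,
      U ∈ Matrix.unitaryGroup (Fin n × Fin k) ℂ ∧
      ∀ (ψ : Fin n → ℂ) (a : Fin n) (i : Fin k),
        U.mulVec (fun p => ψ p.1 * (if p.2 = (⟨0, hk⟩ : Fin k) then 1 else 0)) (a, i)
          = (M i).mulVec ψ a := by
  classical
  set z : Fin k := ⟨0, hk⟩ with hz
  -- the candidate columns
  set v : (Fin n × Fin k) → EuclideanSpace ℂ (Fin n × Fin k) :=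
    fun p => WithLp.toLp 2 (fun q : Fin n × Fin k => M q.2 q.1 p.1) with hv
  set s : Set (Fin n × Fin k) := {p | p.2 = z} with hs
  have hinner : ∀ p p' : Fin n × Fin k,
      inner ℂ (v p) (v p') = ((∑ i, (M i)ᴴ * M i) p.1 p'.1 : ℂ) := by
    intro p p'
    rw [PiLp.inner_apply]
    simp only [Matrix.sum_apply, Matrix.mul_apply, Matrix.conjTranspose_apply]
    rw [Finset.sum_comm]
    rw [← Fintype.sum_prod_type']
    apply Finset.sum_congr rfl
    intro q _
    simp [hv, RCLike.inner_apply, mul_comm, Matrix.star_apply]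
  have horth : Orthonormal ℂ (s.restrict v) := by
    rw [orthonormal_iff_ite]
    rintro ⟨p, hp⟩ ⟨p', hp'⟩
    show inner ℂ (v p) (v p') = _
    rw [hinner, hmeas]
    simp only [hs, Set.mem_setOf_eq] at hp hp'
    by_cases h : p.1 = p'.1
    · have : p = p' := Prod.ext h (hp.trans hp'.symm)
      simp [this, Matrix.one_apply]
    · have : p ≠ p' := fun hc => h (by rw [hc])
      simp [Matrix.one_apply, h, Subtype.ext_iff, this]
  have hcard : Module.finrank ℂ (EuclideanSpace ℂ (Fin n × Fin k))
      = Fintype.card (Fin n × Fin k) := finrank_euclideanSpace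
  obtain ⟨b, hb⟩ := horth.exists_orthonormalBasis_extension_of_card_eq hcard
  refine ⟨Matrix.of (fun q p => b p q), ?_, ?_⟩
  · rw [Matrix.mem_unitaryGroup_iff']
    ext p p'
    have := b.orthonormal
    rw [orthonormal_iff_ite] at this
    have h2 := this p p'
    rw [PiLp.inner_apply] at h2
    simp only [Matrix.mul_apply, Matrix.star_apply, Matrix.conjTranspose_apply,
      Matrix.of_apply, Matrix.one_apply]
    rw [← h2]
    apply Finset.sum_congr rfl
    intro q _
    simp [RCLike.inner_apply, mul_comm, Matrix.star_apply]
  · intro ψ a i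
    have hbv : ∀ c : Fin n, b (c, z) = v (c, z) := fun c => hb (c, z) rfl
    rw [Matrix.mulVec, dotProduct]
    rw [Fintype.sum_prod_type]
    have : ∀ c : Fin n, ∑ j : Fin k,
        Matrix.of (fun q p => b p q) (a, i) (c, j) * (ψ c * if j = z then 1 else 0)
        = M i a c * ψ c := by
      intro c
      rw [Finset.sum_eq_single z]
      · simp only [if_pos rfl, mul_one, Matrix.of_apply, hbv c]
        simp [hv, mul_comm]
      · intro j _ hj; simp [hj]
      · simp
    simp only [this]
    rw [Matrix.mulVec, dotProduct]
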